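/- Let W be a Coxeter group and suppose w = u·v with the supports of u and v disjoint (as subsets of the simple reflections). Then the Bruhat interval [e,w] is isomorphic as a poset to the product [e,u] × [e,v]. -/

import Mathlib

namespace Cox

variable {B : Type*} {W : Type*} [Group W] {M : CoxeterMatrix B} (cs : CoxeterSystem M W)

/-- One step of Bruhat order: right-multiply by a reflection, increasing length. -/
def lt1 (u v : W) : Prop :=
  (∃ t : W, cs.IsReflection t ∧ v = u * t) ∧ cs.length u < cs.length v

/-- The (strong) Bruhat order on `W`. -/
def le (u v : W) : Prop := Relation.ReflTransGen (lt1 cs) u v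

/-- The support of `w`: the simple reflections lying below `w` in Bruhat order
(equivalently, appearing in any reduced word for `w`). -/
def supp (w : W) : Set B := {i | le cs (cs.simple i) w}

/-- The standard parabolic subgroup generated by the simple reflections in `K`. -/
def parab (K : Set B) : Subgroup W := Subgroup.closure (cs.simple '' K)

/-- `x` belongs to the parabolic quotient `W^K`: no right descents in `K`. -/
def InQuot (K : Set B) (x : W) : Prop :=
  ∀ i ∈ K, cs.length x < cs.length (x * cs.simple i)

/-- The left descent set of `v`. -/
def DescL (v : W) : Set B := {i | cs.length (cs.simple i * v) < cs.length v}

/-- `x` is the longest element of the standard parabolic subgroup `W_K`. -/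
def IsLongest (K : Set B) (x : W) : Prop :=
  x ∈ parab cs K ∧ ∀ y ∈ parab cs K, cs.length y ≤ cs.length x

end Cox

open Cox


namespace CoxAux


open List CoxeterSystem

attribute [local instance] Classical.propDecidable

lemma zmod2_add_self (x : ZMod 2) : x + x = 0 := by revert x; decide

lemma grp_aux {W : Type*} [Group W] (a b : W) (ha : a⁻¹ = a) (hb : b⁻¹ = b) (l : ℕ) :
    (a * b)⁻¹ * (b * (a * b) ^ l) * (b * a)⁻¹ = b * (a * b) ^ (l + 1 + 1) := by
  have h2 : (a * b) ^ (l + 1 + 1) = (a * b) * ((a * b) ^ l * (a * b)) := by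
    rw [pow_succ, pow_succ']
    group
  rw [h2, mul_inv_rev, mul_inv_rev, ha, hb]
  simp [mul_assoc]

variable {B : Type*} {W : Type*} [Group W] {M : CoxeterMatrix B} (cs : CoxeterSystem M W)

local prefix:100 "s" => cs.simple
local prefix:100 "π" => cs.wordProd
local prefix:100 "ℓ" => cs.length

lemma conj_eq_iff (A C x y : W) : A * x * C = y ↔ x = A⁻¹ * y * C⁻¹ := by
  constructor
  · intro h; rw [← h]; group
  · intro h; rw [h]; group

/-- The Bjorner–Brenti style action of a simple reflection on `W × ZMod 2`. -/
noncomputable def g (i : B) : Function.End (W × ZMod 2) :=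
  fun p => (s i * p.1 * s i, p.2 + if p.1 = s i then 1 else 0)

lemma g_pow (i j : B) (m : ℕ) (p : W × ZMod 2) :
    (((g cs i * g cs j) ^ m) : Function.End (W × ZMod 2)) p =
      ((s i * s j) ^ m * p.1 * (s j * s i) ^ m,
        p.2 + ∑ l ∈ Finset.range (2 * m),
          if p.1 = s j * (s i * s j) ^ l then (1 : ZMod 2) else 0) := by
  induction m generalizing p with
  | zero => simp [Function.End.one_def]
  | succ m ih =>
    have hmul : ∀ (f h : Function.End (W × ZMod 2)) q, (f * h) q = f (h q) := fun _ _ _ => rfl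
    rw [pow_succ, hmul, hmul]
    rw [show (g cs j) p = (s j * p.1 * s j, p.2 + if p.1 = s j then 1 else 0) from rfl]
    rw [show ∀ q : W × ZMod 2, (g cs i) q = (s i * q.1 * s i, q.2 + if q.1 = s i then 1 else 0)
      from fun _ => rfl]
    rw [ih]
    dsimp only
    rw [Prod.mk.injEq]
    constructor
    · -- first components
      rw [pow_succ (s i * s j) m, pow_succ' (s j * s i) m]
      simp [mul_assoc]
    · -- second components
      have c0 : (if p.1 = s j then (1:ZMod 2) else 0)
          = (if p.1 = s j * (s i * s j) ^ 0 then (1:ZMod 2) else 0) := by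
        simp
      have c1 : (if s j * p.1 * s j = s i then (1:ZMod 2) else 0)
          = (if p.1 = s j * (s i * s j) ^ (0 + 1) then (1:ZMod 2) else 0) := by
        congr 1
        rw [conj_eq_iff, cs.inv_simple, eq_iff_iff]
        constructor <;> intro h <;> rw [h] <;> simp [mul_assoc]
      have c2 : ∀ l ∈ Finset.range (2 * m),
          (if s i * (s j * p.1 * s j) * s i = s j * (s i * s j) ^ l then (1:ZMod 2) else 0)
          = (if p.1 = s j * (s i * s j) ^ (l + 1 + 1) then (1:ZMod 2) else 0) := by
        intro l _
        congr 1
        have assoc : s i * (s j * p.1 * s j) * s i = (s i * s j) * p.1 * (s j * s i) := by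
          simp [mul_assoc]
        rw [assoc, conj_eq_iff, grp_aux (s i) (s j) (cs.inv_simple i) (cs.inv_simple j) l]
      rw [Finset.sum_congr rfl c2, c1, c0]
      have h2 : 2 * (m + 1) = (2 * m + 1) + 1 := by ring
      rw [h2, Finset.sum_range_succ', Finset.sum_range_succ']
      ring

lemma g_liftable : CoxeterMatrix.IsLiftable M (g cs) := by
  intro i j
  funext p
  rw [g_pow]
  have hc : (s i * s j) ^ M i j = 1 := cs.simple_mul_simple_pow i j
  have hc' : (s j * s i) ^ M i j = 1 := cs.simple_mul_simple_pow' i j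
  have hsum : ∑ l ∈ Finset.range (2 * M i j),
      (if p.1 = s j * (s i * s j) ^ l then (1 : ZMod 2) else 0) = 0 := by
    rw [two_mul, Finset.sum_range_add]
    have : ∀ l : ℕ, (if p.1 = s j * (s i * s j) ^ (M i j + l) then (1 : ZMod 2) else 0)
        = (if p.1 = s j * (s i * s j) ^ l then (1 : ZMod 2) else 0) := by
      intro l
      congr 2
      rw [pow_add, hc, one_mul]
    simp only [this]
    exact zmod2_add_self _
  rw [hc, hc', hsum, one_mul, mul_one, add_zero]
  rfl

/-- The homomorphism `W →* Function.End (W × ZMod 2)`. -/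
noncomputable def phi : W →* Function.End (W × ZMod 2) := cs.lift ⟨g cs, g_liftable cs⟩

lemma phi_simple (i : B) : phi cs (s i) = g cs i := cs.lift_apply_simple (g_liftable cs) i

/-- mod-2 count of `t` in a list. -/
noncomputable def cnt (t : W) (l : List W) : ZMod 2 :=
  (l.map fun r => if r = t then (1 : ZMod 2) else 0).sum

@[simp] lemma cnt_nil (t : W) : cnt t ([] : List W) = 0 := rfl

lemma cnt_cons (t x : W) (l : List W) :
    cnt t (x :: l) = (if x = t then (1 : ZMod 2) else 0) + cnt t l := by
  simp [cnt]

lemma cnt_eq_zero_of_not_mem {t : W} {l : List W} (h : t ∉ l) : cnt t l = 0 := by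
  induction l with
  | nil => rfl
  | cons x l ih =>
    rw [cnt_cons]
    have hx : x ≠ t := fun hxt => h (hxt ▸ List.mem_cons_self (a := x) (l := l))
    rw [if_neg hx, ih (fun hm => h (List.mem_cons_of_mem _ hm)), add_zero]

lemma phi_word (ω : List B) (t : W) (ε : ZMod 2) :
    phi cs (π ω) (t, ε) = (π ω * t * (π ω)⁻¹, ε + cnt t (cs.rightInvSeq ω)) := by
  induction ω generalizing ε with
  | nil =>
    simp only [wordProd_nil, map_one, rightInvSeq_nil, cnt_nil, add_zero]
    show (t, ε) = _
    simp
  | cons i ω ih =>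
    have hmul : ∀ (f h : Function.End (W × ZMod 2)) q, (f * h) q = f (h q) := fun _ _ _ => rfl
    rw [cs.wordProd_cons, map_mul, hmul, ih, phi_simple]
    rw [show ∀ q : W × ZMod 2, (g cs i) q = (s i * q.1 * s i, q.2 + if q.1 = s i then 1 else 0)
      from fun _ => rfl]
    dsimp only
    rw [Prod.mk.injEq]
    constructor
    · rw [mul_inv_rev, cs.inv_simple]
      simp [mul_assoc]
    · rw [show cs.rightInvSeq (i :: ω) = ((π ω)⁻¹ * s i * π ω) :: cs.rightInvSeq ω from rfl]
      rw [cnt_cons]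
      have : (if π ω * t * (π ω)⁻¹ = s i then (1:ZMod 2) else 0)
          = (if (π ω)⁻¹ * s i * π ω = t then (1:ZMod 2) else 0) := by
        congr 1
        rw [eq_iff_iff]
        constructor <;> intro h <;> rw [← h] <;> group
      rw [this]
      ring

/-- The reflection cocycle mod 2. -/
noncomputable def eta (w t : W) : ZMod 2 := (phi cs w (t, 0)).2

lemma eta_eq_cnt {w : W} {ω : List B} (hw : w = π ω) (t : W) :
    eta cs w t = cnt t (cs.rightInvSeq ω) := by
  rw [eta, hw, phi_word]
  simp

lemma phi_spec (w t : W) (ε : ZMod 2) :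
    phi cs w (t, ε) = (w * t * w⁻¹, ε + eta cs w t) := by
  obtain ⟨ω, -, hw⟩ := cs.exists_reduced_word' w
  rw [eta_eq_cnt cs hw t, hw, phi_word]

lemma eta_mul (x y t : W) : eta cs (x * y) t = eta cs y t + eta cs x (y * t * y⁻¹) := by
  have h1 : phi cs (x * y) (t, 0) = phi cs x (phi cs y (t, 0)) := by
    rw [map_mul]; rfl
  rw [phi_spec cs y t 0, zero_add, phi_spec cs x, phi_spec cs (x*y) t 0, zero_add] at h1
  simpa using congrArg Prod.snd h1

lemma eta_one (t : W) : eta cs 1 t = 0 := by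
  rw [eta, map_one]
  rfl

lemma eta_simple_self (i : B) : eta cs (s i) (s i) = 1 := by
  rw [eta, phi_simple]
  simp [g]

lemma eta_refl_self {t : W} (ht : cs.IsReflection t) : eta cs t t = 1 := by
  obtain ⟨x, i, rfl⟩ := ht
  set t := x * s i * x⁻¹ with hts
  have h1 : eta cs t t = eta cs x⁻¹ t + eta cs (x * s i) (x⁻¹ * t * x⁻¹⁻¹) := by
    rw [show t = (x * s i) * x⁻¹ from by rw [hts], eta_mul]
  have h2 : x⁻¹ * t * x⁻¹⁻¹ = s i := by rw [hts]; group
  have h3 : eta cs (x * s i) (s i) = eta cs (s i) (s i) + eta cs x (s i * s i * (s i)⁻¹) := by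
    rw [eta_mul]
  have h4 : s i * s i * (s i)⁻¹ = s i := by group
  have h5 : eta cs x⁻¹ t + eta cs x (s i) = 0 := by
    have := eta_mul cs x x⁻¹ t
    rw [mul_inv_cancel, eta_one] at this
    rw [show x⁻¹ * t * x⁻¹⁻¹ = s i from h2] at this
    exact this.symm
  rw [h1, h2, h3, h4, eta_simple_self]
  have : ∀ a b : ZMod 2, a + b = 0 → a + (1 + b) = 1 := by decide
  exact this _ _ h5

lemma eta_eq_one_iff {w t : W} (ht : cs.IsReflection t) :
    eta cs w t = 1 ↔ ℓ (w * t) < ℓ w := by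
  have dir : ∀ v : W, eta cs v t = 1 → ℓ (v * t) < ℓ v := by
    intro v hv
    obtain ⟨ω, hred, hw⟩ := cs.exists_reduced_word' v
    have hcnt : cnt t (cs.rightInvSeq ω) = 1 := by rw [← eta_eq_cnt cs hw, hv]
    have hmem : t ∈ cs.rightInvSeq ω := by
      by_contra hmem
      rw [cnt_eq_zero_of_not_mem hmem] at hcnt
      exact absurd hcnt (by decide)
    have := cs.isRightInversion_of_mem_rightInvSeq hred hmem
    rw [← hw] at this
    exact this.2
  constructor
  · exact dir w
  · intro hlen
    by_contra hne
    have h0 : eta cs w t = 0 := by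
      have : ∀ x : ZMod 2, x = 0 ∨ x = 1 := by decide
      rcases this (eta cs w t) with h | h
      · exact h
      · exact absurd h hne
    have h1 : eta cs (w * t) t = 1 := by
      rw [eta_mul, eta_refl_self cs ht, ht.inv, ht.mul_self, one_mul, h0, add_zero]
    have := dir (w * t) h1
    rw [mul_assoc, ht.mul_self, mul_one] at this
    omega

/-- Strong exchange property. -/
lemma strong_exchange' {ω : List B} {t : W} (ht : cs.IsReflection t)
    (h : ℓ (π ω * t) < ℓ (π ω)) :
    ∃ j < ω.length, π ω * t = π (ω.eraseIdx j) := by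
  have heta : eta cs (π ω) t = 1 := (eta_eq_one_iff cs ht).mpr h
  have hcnt : cnt t (cs.rightInvSeq ω) = 1 := by rw [← eta_eq_cnt cs rfl, heta]
  have hmem : t ∈ cs.rightInvSeq ω := by
    by_contra hmem
    rw [cnt_eq_zero_of_not_mem hmem] at hcnt
    exact absurd hcnt (by decide)
  obtain ⟨j, hj, hjt⟩ := List.mem_iff_getElem.mp hmem
  rw [cs.length_rightInvSeq] at hj
  refine ⟨j, hj, ?_⟩
  rw [← cs.wordProd_mul_getD_rightInvSeq ω j]
  congr 1
  rw [List.getD_eq_getElem _ 1 (by rw [cs.length_rightInvSeq]; exact hj)]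
  exact hjt.symm


lemma le_length {x y : W} (h : le cs x y) : ℓ x ≤ ℓ y := by
  induction h with
  | refl => exact Nat.le_refl _
  | tail _ step ih => have := step.2; omega

lemma le_mul_of_ascent {x t : W} (ht : cs.IsReflection t) (h : ℓ x < ℓ (x * t)) :
    le cs x (x * t) :=
  Relation.ReflTransGen.single ⟨⟨t, ht, rfl⟩, h⟩

lemma le_smul_of_ascent {y : W} (i : B) (h : ℓ y < ℓ (s i * y)) : le cs y (s i * y) := by
  have ht : cs.IsReflection (y⁻¹ * s i * y) := by
    have := (cs.isReflection_simple i).conj y⁻¹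
    simpa using this
  have key : y * (y⁻¹ * s i * y) = s i * y := by group
  have := le_mul_of_ascent cs ht (x := y) (by rw [key]; exact h)
  rwa [key] at this

lemma smul_le_of_descent {y : W} (i : B) (h : ℓ (s i * y) < ℓ y) : le cs (s i * y) y := by
  have := le_smul_of_ascent cs (y := s i * y) i
    (by rwa [cs.simple_mul_simple_cancel_left])
  rwa [cs.simple_mul_simple_cancel_left] at this

lemma ascent_succ {y : W} {i : B} (h : ℓ y < ℓ (s i * y)) : ℓ (s i * y) = ℓ y + 1 := by
  rcases cs.length_simple_mul y i with h' | h' <;> omega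

lemma exists_reduced_sublist (ω : List B) :
    ∃ σ, σ <+ ω ∧ cs.IsReduced σ ∧ π σ = π ω := by
  induction ω with
  | nil => exact ⟨[], List.Sublist.refl _, by simp [CoxeterSystem.IsReduced], rfl⟩
  | cons i ω ih =>
    obtain ⟨σ, hsub, hred, hπ⟩ := ih
    rcases Nat.lt_or_ge (ℓ (π σ)) (ℓ (s i * π σ)) with hasc | hdesc
    · refine ⟨i :: σ, hsub.cons₂ i, ?_, ?_⟩
      · show ℓ (π (i :: σ)) = (i :: σ).length
        rw [wordProd_cons, ascent_succ cs hasc, hred]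
        simp
      · rw [wordProd_cons, wordProd_cons, hπ]
    · have hdesc' : ℓ (s i * π σ) < ℓ (π σ) :=
        lt_of_le_of_ne hdesc (cs.length_simple_mul_ne (π σ) i)
    -- left strong exchange via reverse
      have h1 : ℓ (π σ.reverse * s i) < ℓ (π σ.reverse) := by
        rw [wordProd_reverse]
        have e1 : ℓ ((π σ)⁻¹ * s i) = ℓ (s i * π σ) := by
          rw [← cs.length_inv]
          congr 1
          rw [mul_inv_rev, cs.inv_simple, inv_inv]
        rw [e1, cs.length_inv]
        exact hdesc'
      obtain ⟨j, hj, hex⟩ := strong_exchange' cs (cs.isReflection_simple i) h1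
      have hπrev : π σ.reverse = (π σ)⁻¹ := cs.wordProd_reverse σ
      have hval : π ((σ.reverse.eraseIdx j).reverse) = s i * π σ := by
        rw [wordProd_reverse, ← hex, hπrev, mul_inv_rev, cs.inv_simple, inv_inv]
      have hlen : (σ.reverse.eraseIdx j).reverse.length = σ.length - 1 := by
        have := List.length_eraseIdx_add_one hj
        rw [List.length_reverse]
        rw [List.length_reverse] at this
        omega
      have hnz : 1 ≤ ℓ (π σ) := by
        by_contra hz
        have : ℓ (π σ) = 0 := by omega
        rw [cs.length_eq_zero_iff.mp this] at hdesc'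
        simp [cs.length_simple] at hdesc'
      refine ⟨(σ.reverse.eraseIdx j).reverse, ?_, ?_, ?_⟩
      · have h2 : (σ.reverse.eraseIdx j).reverse <+ σ := by
          have := (List.eraseIdx_sublist σ.reverse j).reverse
          rwa [List.reverse_reverse] at this
        exact (h2.trans hsub).cons i
      · show ℓ (π (σ.reverse.eraseIdx j).reverse) = _
        rw [hval, hlen]
        have hred' : ℓ (π σ) = σ.length := hred
        rcases cs.length_simple_mul (π σ) i with h' | h' <;> omega
      · rw [hval, wordProd_cons, hπ]

lemma exists_sublist_of_le {x w : W} (h : le cs x w) {ω : List B}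
    (hred : cs.IsReduced ω) (hw : w = π ω) :
    ∃ σ, σ <+ ω ∧ cs.IsReduced σ ∧ x = π σ := by
  induction h using Relation.ReflTransGen.head_induction_on with
  | refl => exact ⟨ω, List.Sublist.refl _, hred, hw⟩
  | @head a c hstep hle ih =>
    obtain ⟨σc, hsubc, hredc, hc⟩ := ih
    obtain ⟨⟨t, ht, hc_eq⟩, hlen⟩ := hstep
    -- hc_eq : c = a * t, hlen : ℓ a < ℓ c, hc : c = π σc
    have ha : a = c * t := by rw [hc_eq, mul_assoc, ht.mul_self, mul_one]
    have hexlen : ℓ (π σc * t) < ℓ (π σc) := by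
      rw [← hc, ← ha]
      exact hlen
    obtain ⟨j, hj, hex⟩ := strong_exchange' cs ht hexlen
    obtain ⟨σ, hsub2, hred2, hπ2⟩ := exists_reduced_sublist cs (σc.eraseIdx j)
    refine ⟨σ, (hsub2.trans (List.eraseIdx_sublist σc j)).trans hsubc, hred2, ?_⟩
    rw [hπ2, ← hex, ← hc, ← ha]

lemma lifting : ∀ n : ℕ, ∀ y : W, ℓ y ≤ n → ∀ x, le cs x y → ∀ i : B,
    (ℓ y < ℓ (s i * y) → le cs (s i * x) (s i * y)) ∧
    (ℓ (s i * y) < ℓ y → le cs (s i * x) y) := by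
  intro n
  induction n with
  | zero =>
    intro y hy x hxy i
    have hy1 : y = 1 := cs.length_eq_zero_iff.mp (by omega)
    have hx1 : x = 1 := by
      have := le_length cs hxy
      exact cs.length_eq_zero_iff.mp (by omega)
    subst hy1; subst hx1
    constructor
    · intro _; exact Relation.ReflTransGen.refl
    · intro habs
      rw [mul_one, cs.length_simple, cs.length_one] at habs
      omega
  | succ n ihn =>
    intro y hy x hxy i
    constructor
    · intro hasc
      rcases hxy.cases_tail with heq | ⟨z, hxz, hstep⟩
      · rw [heq]
        exact Relation.ReflTransGen.refl
      · obtain ⟨⟨t, ht, hy_eq⟩, hlz⟩ := hstep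
        have hzn : ℓ z ≤ n := by omega
        rcases Nat.lt_or_ge (ℓ z) (ℓ (s i * z)) with hza | hzd
        · have h1 : le cs (s i * x) (s i * z) := (ihn z hzn x hxz i).1 hza
          have h2 : lt1 cs (s i * z) (s i * y) := by
            refine ⟨⟨t, ht, by rw [hy_eq, mul_assoc]⟩, ?_⟩
            have e1 := ascent_succ cs hza
            have e2 := ascent_succ cs hasc
            omega
          exact h1.trans (Relation.ReflTransGen.single h2)
        · have hzd' : ℓ (s i * z) < ℓ z :=
            lt_of_le_of_ne hzd (cs.length_simple_mul_ne z i)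
          have h1 : le cs (s i * x) z := (ihn z hzn x hxz i).2 hzd'
          have h2 : le cs z y := Relation.ReflTransGen.single ⟨⟨t, ht, hy_eq⟩, hlz⟩
          have h3 : le cs y (s i * y) := le_smul_of_ascent cs i hasc
          exact (h1.trans h2).trans h3
    · intro hdesc
      rcases Nat.lt_or_ge (ℓ (s i * x)) (ℓ x) with hxd | hxa
      · exact (smul_le_of_descent cs i hxd).trans hxy
      · have hxa' : ℓ x < ℓ (s i * x) :=
          lt_of_le_of_ne hxa (cs.length_simple_mul_ne x i).symm
        rcases hxy.cases_tail with heq | ⟨z, hxz, hstep⟩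
        · rw [heq] at hdesc
          omega
        · obtain ⟨⟨t, ht, hy_eq⟩, hlz⟩ := hstep
          have hzn : ℓ z ≤ n := by omega
          rcases Nat.lt_or_ge (ℓ (s i * z)) (ℓ z) with hzd | hza'
          · have h1 : le cs (s i * x) z := (ihn z hzn x hxz i).2 hzd
            exact h1.trans (Relation.ReflTransGen.single ⟨⟨t, ht, hy_eq⟩, hlz⟩)
          · have hza : ℓ z < ℓ (s i * z) :=
              lt_of_le_of_ne hza' (cs.length_simple_mul_ne z i).symm
            have h1 : le cs (s i * x) (s i * z) := (ihn z hzn x hxz i).1 hza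
            have hD : le cs (s i * z) y := by
              rcases Nat.lt_or_ge (ℓ (s i * z)) (ℓ (s i * y)) with hlt | hge
              · have step : lt1 cs (s i * z) (s i * y) :=
                  ⟨⟨t, ht, by rw [hy_eq, mul_assoc]⟩, hlt⟩
                exact (Relation.ReflTransGen.single step).trans
                  (smul_le_of_descent cs i hdesc)
              · obtain ⟨ρ, hρred, hρ⟩ := cs.exists_reduced_word' (s i * y)
                have hylen : ℓ (s i * y) + 1 = ℓ y := by
                  rcases cs.length_simple_mul y i with h' | h' <;> omega
                have hπω : y = π (i :: ρ) := by
                  rw [wordProd_cons, ← hρ, cs.simple_mul_simple_cancel_left]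
                have hyt : ℓ (π (i :: ρ) * t) < ℓ (π (i :: ρ)) := by
                  rw [← hπω]
                  have : y * t = z := by
                    rw [hy_eq, mul_assoc, ht.mul_self, mul_one]
                  rw [this]
                  exact hlz
                obtain ⟨j, hj, hex⟩ := strong_exchange' cs ht hyt
                have hzex : z = π ((i :: ρ).eraseIdx j) := by
                  rw [← hex, ← hπω, hy_eq, mul_assoc, ht.mul_self, mul_one]
                match j with
                | 0 =>
                  have : z = s i * y := by rw [hzex]; simp [hρ]
                  rw [show s i * z = y by rw [this, cs.simple_mul_simple_cancel_left]]
                  exact Relation.ReflTransGen.refl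
                | Nat.succ k =>
                  exfalso
                  have hz2 : s i * z = π (ρ.eraseIdx k) := by
                    rw [hzex]
                    show s i * π (i :: ρ.eraseIdx k) = _
                    rw [wordProd_cons, cs.simple_mul_simple_cancel_left]
                  have hlb : ℓ (s i * z) ≤ (ρ.eraseIdx k).length := by
                    rw [hz2]; exact cs.length_wordProd_le _
                  have hρlen : ρ.length = ℓ (s i * y) := by rw [hρ]; exact hρred.symm
                  have hk : (ρ.eraseIdx k).length ≤ ρ.length - 1 := by
                    have hkl : k < ρ.length := by
                      rw [List.length_cons] at hj; omega
                    have := List.length_eraseIdx_add_one hkl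
                    omega
                  have := ascent_succ cs hza
                  omega
            exact h1.trans hD

lemma le_of_sublist {σ ω : List B} (hred : cs.IsReduced ω) (hsub : σ <+ ω) :
    le cs (π σ) (π ω) := by
  induction ω generalizing σ with
  | nil =>
    rw [List.sublist_nil.mp hsub]
    exact Relation.ReflTransGen.refl
  | cons i ω ihω =>
    have hredω : cs.IsReduced ω := by
      have := hred.drop 1
      simpa using this
    have hasc : ℓ (π ω) < ℓ (s i * π ω) := by
      have h1 : ℓ (s i * π ω) = ω.length + 1 := by
        have : ℓ (π (i :: ω)) = (i :: ω).length := hred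
        rw [wordProd_cons] at this
        simpa using this
      have h2 : ℓ (π ω) ≤ ω.length := cs.length_wordProd_le ω
      omega
    cases hsub with
    | cons _ h =>
      exact (ihω hredω h).trans (by rw [wordProd_cons]; exact le_smul_of_ascent cs i hasc)
    | cons_cons _ h =>
      rw [wordProd_cons, wordProd_cons]
      exact (lifting cs (ℓ (π ω)) (π ω) (Nat.le_refl _) _ (ihω hredω h) i).1 hasc



/-- `x` is a product of a reduced word with letters in `K`. -/
def WS (K : Set B) (x : W) : Prop :=
  ∃ ω, cs.IsReduced ω ∧ x = π ω ∧ ∀ i ∈ ω, i ∈ K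

lemma mem_supp_of_mem_reduced {u : W} {ω : List B} (hred : cs.IsReduced ω)
    (hu : u = π ω) {i : B} (hi : i ∈ ω) : i ∈ supp cs u := by
  have := le_of_sublist cs hred (List.singleton_sublist.mpr hi)
  rwa [wordProd_singleton, ← hu] at this

lemma WS_of_le {u x : W} (hx : le cs x u) : WS cs (supp cs u) x := by
  obtain ⟨ωu, hred, hu⟩ := cs.exists_reduced_word' u
  obtain ⟨σ, hsub, hredσ, hxσ⟩ := exists_sublist_of_le cs hx hred hu
  exact ⟨σ, hredσ, hxσ, fun i hi =>
    mem_supp_of_mem_reduced cs hred hu (hsub.subset hi)⟩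

lemma WS_of_word {K : Set B} (ω : List B) (hmem : ∀ i ∈ ω, i ∈ K) :
    WS cs K (π ω) := by
  obtain ⟨σ, hsub, hredσ, hπσ⟩ := exists_reduced_sublist cs ω
  exact ⟨σ, hredσ, hπσ.symm, fun i hi => hmem i (hsub.subset hi)⟩

variable {u v : W}

lemma cancel (hdisj : supp cs u ∩ supp cs v = ∅) {d : W}
    (h1 : WS cs (supp cs u) d) (h2 : WS cs (supp cs v) d) : d = 1 := by
  obtain ⟨ω, hred, hd, hmem⟩ := h1
  cases ω with
  | nil => rw [hd, wordProd_nil]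
  | cons i ωr =>
    exfalso
    have hi : i ∈ supp cs u := hmem i (List.mem_cons_self (a := i) (l := ωr))
    have hsi : le cs (s i) d := by
      have := le_of_sublist cs hred (List.singleton_sublist.mpr (List.mem_cons_self (a := i) (l := ωr)))
      rwa [wordProd_singleton, ← hd] at this
    obtain ⟨ω', hred', hd', hmem'⟩ := h2
    obtain ⟨τ, hτsub, hτred, hsiτ⟩ := exists_sublist_of_le cs hsi hred' hd'
    have hτlen : τ.length = 1 := by
      have h' : ℓ (π τ) = τ.length := hτred
      rw [← hsiτ, cs.length_simple] at h'
      omega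
    obtain ⟨j, rfl⟩ := List.length_eq_one_iff.mp hτlen
    have hj : j ∈ supp cs v := hmem' j (hτsub.subset (List.mem_singleton_self j))
    have hiv : le cs (s i) v := by
      rw [hsiτ, wordProd_singleton]
      exact hj
    have : i ∈ (supp cs u ∩ supp cs v) := ⟨hi, hiv⟩
    rw [hdisj] at this
    exact this

lemma uniq (hdisj : supp cs u ∩ supp cs v = ∅) {p p' q q' : W}
    (hp : WS cs (supp cs u) p) (hp' : WS cs (supp cs u) p')
    (hq : WS cs (supp cs v) q) (hq' : WS cs (supp cs v) q')
    (h : p * q = p' * q') : p = p' ∧ q = q' := by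
  obtain ⟨ωp, _, hpw, hpm⟩ := hp
  obtain ⟨ωp', _, hpw', hpm'⟩ := hp'
  obtain ⟨ωq, _, hqw, hqm⟩ := hq
  obtain ⟨ωq', _, hqw', hqm'⟩ := hq'
  have hdI : WS cs (supp cs u) (p'⁻¹ * p) := by
    have := WS_of_word cs (ωp'.reverse ++ ωp) (by
      intro i hi
      rcases List.mem_append.mp hi with hi | hi
      · exact hpm' i (List.mem_reverse.mp hi)
      · exact hpm i hi)
    rwa [wordProd_append, wordProd_reverse, ← hpw, ← hpw'] at this
  have hdJ : WS cs (supp cs v) (p'⁻¹ * p) := by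
    have heq : p'⁻¹ * p = q' * q⁻¹ := by
      have h2 := congrArg (fun z => p'⁻¹ * z * q⁻¹) h
      simpa [mul_assoc] using h2
    have := WS_of_word cs (ωq' ++ ωq.reverse) (by
      intro i hi
      rcases List.mem_append.mp hi with hi | hi
      · exact hqm' i hi
      · exact hqm i (List.mem_reverse.mp hi))
    rw [wordProd_append, wordProd_reverse, ← hqw, ← hqw'] at this
    rwa [heq]
  have hd1 : p'⁻¹ * p = 1 := cancel cs hdisj hdI hdJ
  have hpp : p = p' := by
    have h2 := congrArg (fun z => p' * z) hd1
    simpa [mul_assoc] using h2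
  refine ⟨hpp, ?_⟩
  rw [hpp] at h
  exact mul_left_cancel h

lemma append_reduced (hdisj : supp cs u ∩ supp cs v = ∅) {ωp ωq : List B}
    (hpred : cs.IsReduced ωp) (hpm : ∀ i ∈ ωp, i ∈ supp cs u)
    (hqred : cs.IsReduced ωq) (hqm : ∀ i ∈ ωq, i ∈ supp cs v) :
    cs.IsReduced (ωp ++ ωq) := by
  obtain ⟨σ, hsub, hredσ, hπσ⟩ := exists_reduced_sublist cs (ωp ++ ωq)
  obtain ⟨α, β, rfl, hα, hβ⟩ := List.sublist_append_iff.mp hsub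
  have hαred : cs.IsReduced α := by
    have := hredσ.take α.length
    rwa [List.take_left] at this
  have hβred : cs.IsReduced β := by
    have := hredσ.drop α.length
    rwa [List.drop_left] at this
  have hWa : WS cs (supp cs u) (π α) :=
    ⟨α, hαred, rfl, fun i hi => hpm i (hα.subset hi)⟩
  have hWb : WS cs (supp cs v) (π β) :=
    ⟨β, hβred, rfl, fun i hi => hqm i (hβ.subset hi)⟩
  have hWp : WS cs (supp cs u) (π ωp) := ⟨ωp, hpred, rfl, hpm⟩
  have hWq : WS cs (supp cs v) (π ωq) := ⟨ωq, hqred, rfl, hqm⟩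
  have hprod : π α * π β = π ωp * π ωq := by
    rw [← wordProd_append, ← wordProd_append, hπσ]
  obtain ⟨hap, hbq⟩ := uniq cs hdisj hWa hWp hWb hWq hprod
  have hlα : α.length = ωp.length := by
    have h1 : ℓ (π α) = α.length := hαred
    have h2 : ℓ (π ωp) = ωp.length := hpred
    rw [hap, h2] at h1
    omega
  have hlβ : β.length = ωq.length := by
    have h1 : ℓ (π β) = β.length := hβred
    have h2 : ℓ (π ωq) = ωq.length := hqred
    rw [hbq, h2] at h1
    omega
  have : α ++ β = ωp ++ ωq := hsub.eq_of_length (by simp [hlα, hlβ])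
  rw [← this]
  exact hredσ

lemma mul_le_mul (hdisj : supp cs u ∩ supp cs v = ∅) {a₁ a₂ b₁ b₂ : W}
    (h1 : le cs a₁ b₁) (h2 : le cs a₂ b₂)
    (hb1 : WS cs (supp cs u) b₁) (hb2 : WS cs (supp cs v) b₂) :
    le cs (a₁ * a₂) (b₁ * b₂) := by
  obtain ⟨ω₁, hred₁, hw₁, hm₁⟩ := hb1
  obtain ⟨ω₂, hred₂, hw₂, hm₂⟩ := hb2
  obtain ⟨α₁, hsub₁, hredα₁, ha₁⟩ := exists_sublist_of_le cs h1 hred₁ hw₁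
  obtain ⟨α₂, hsub₂, hredα₂, ha₂⟩ := exists_sublist_of_le cs h2 hred₂ hw₂
  have hΩred : cs.IsReduced (ω₁ ++ ω₂) := append_reduced cs hdisj hred₁ hm₁ hred₂ hm₂
  have := le_of_sublist cs hΩred (hsub₁.append hsub₂)
  rwa [wordProd_append, wordProd_append, ← ha₁, ← ha₂, ← hw₁, ← hw₂] at this

lemma split_le (hdisj : supp cs u ∩ supp cs v = ∅) {x b₁ b₂ : W}
    (hb1 : WS cs (supp cs u) b₁) (hb2 : WS cs (supp cs v) b₂)
    (h : le cs x (b₁ * b₂)) :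
    ∃ a₁ a₂, x = a₁ * a₂ ∧ le cs a₁ b₁ ∧ le cs a₂ b₂ := by
  obtain ⟨ω₁, hred₁, hw₁, hm₁⟩ := hb1
  obtain ⟨ω₂, hred₂, hw₂, hm₂⟩ := hb2
  have hΩred : cs.IsReduced (ω₁ ++ ω₂) := append_reduced cs hdisj hred₁ hm₁ hred₂ hm₂
  have hΩ : b₁ * b₂ = π (ω₁ ++ ω₂) := by rw [wordProd_append, ← hw₁, ← hw₂]
  obtain ⟨σ, hsub, hredσ, hxσ⟩ := exists_sublist_of_le cs h hΩred hΩ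
  obtain ⟨α, β, rfl, hα, hβ⟩ := List.sublist_append_iff.mp hsub
  refine ⟨π α, π β, by rw [hxσ, wordProd_append], ?_, ?_⟩
  · have := le_of_sublist cs hred₁ hα
    rwa [← hw₁] at this
  · have := le_of_sublist cs hred₂ hβ
    rwa [← hw₂] at this

theorem main {w : W} (hw : w = u * v) (hdisj : supp cs u ∩ supp cs v = ∅) :
    ∃ F : {x : W // le cs x w} ≃ {x : W // le cs x u} × {x : W // le cs x v},
      ∀ a b : {x : W // le cs x w},
        le cs a.1 b.1 ↔ (le cs (F a).1.1 (F b).1.1 ∧ le cs (F a).2.1 (F b).2.1) := by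
  have hWu : WS cs (supp cs u) u := WS_of_le cs Relation.ReflTransGen.refl
  have hWv : WS cs (supp cs v) v := WS_of_le cs Relation.ReflTransGen.refl
  have hG : ∀ p : {x : W // le cs x u} × {x : W // le cs x v},
      le cs (p.1.1 * p.2.1) w := by
    intro p
    rw [hw]
    exact mul_le_mul cs hdisj p.1.2 p.2.2 hWu hWv
  set G : {x : W // le cs x u} × {x : W // le cs x v} → {x : W // le cs x w} :=
    fun p => ⟨p.1.1 * p.2.1, hG p⟩ with hGdef
  have hGbij : Function.Bijective G := by
    constructor
    · rintro ⟨⟨p1, hp1⟩, ⟨p2, hp2⟩⟩ ⟨⟨q1, hq1⟩, ⟨q2, hq2⟩⟩ hpq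
      have hprod : p1 * p2 = q1 * q2 := congrArg Subtype.val hpq
      obtain ⟨e1, e2⟩ := uniq cs hdisj (WS_of_le cs hp1) (WS_of_le cs hq1)
        (WS_of_le cs hp2) (WS_of_le cs hq2) hprod
      simp [Prod.ext_iff, Subtype.ext_iff, e1, e2]
    · rintro ⟨x, hx⟩
      rw [hw] at hx
      obtain ⟨a₁, a₂, hx_eq, h₁, h₂⟩ := split_le cs hdisj hWu hWv hx
      exact ⟨⟨⟨a₁, h₁⟩, ⟨a₂, h₂⟩⟩, Subtype.ext hx_eq.symm⟩
  refine ⟨(Equiv.ofBijective G hGbij).symm, ?_⟩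
  intro a b
  have ha : (((Equiv.ofBijective G hGbij).symm a).1.1 *
      ((Equiv.ofBijective G hGbij).symm a).2.1) = a.1 := by
    have := (Equiv.ofBijective G hGbij).apply_symm_apply a
    exact congrArg Subtype.val this
  have hb : (((Equiv.ofBijective G hGbij).symm b).1.1 *
      ((Equiv.ofBijective G hGbij).symm b).2.1) = b.1 := by
    have := (Equiv.ofBijective G hGbij).apply_symm_apply b
    exact congrArg Subtype.val this
  set A₁ := ((Equiv.ofBijective G hGbij).symm a).1
  set A₂ := ((Equiv.ofBijective G hGbij).symm a).2
  set B₁ := ((Equiv.ofBijective G hGbij).symm b).1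
  set B₂ := ((Equiv.ofBijective G hGbij).symm b).2
  constructor
  · intro hab
    rw [← ha, ← hb] at hab
    obtain ⟨a₁', a₂', heq, h₁, h₂⟩ := split_le cs hdisj
      (WS_of_le cs B₁.2) (WS_of_le cs B₂.2) hab
    obtain ⟨e1, e2⟩ := uniq cs hdisj (WS_of_le cs A₁.2) (WS_of_le cs (h₁.trans B₁.2))
      (WS_of_le cs A₂.2) (WS_of_le cs (h₂.trans B₂.2)) heq
    exact ⟨e1 ▸ h₁, e2 ▸ h₂⟩
  · rintro ⟨h1, h2⟩
    rw [← ha, ← hb]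
    exact mul_le_mul cs hdisj h1 h2 (WS_of_le cs B₁.2) (WS_of_le cs B₂.2)


end CoxAux

theorem stmt5 {B W : Type*} [Group W] {M : CoxeterMatrix B} (cs : CoxeterSystem M W)
    (u v w : W) (hw : w = u * v) (hdisj : supp cs u ∩ supp cs v = ∅) :
    ∃ F : {x : W // le cs x w} ≃ {x : W // le cs x u} × {x : W // le cs x v},
      ∀ a b : {x : W // le cs x w},
        le cs a.1 b.1 ↔ (le cs (F a).1.1 (F b).1.1 ∧ le cs (F a).2.1 (F b).2.1) := by
  exact CoxAux.main cs hw hdisj
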